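/- Let n, r, s, k be positive integers with r, s, k ≤ n and r + s ≥ n. Let A be an r×s (0,1)-matrix in which every row contains at least s+k−n and at most k ones and every column contains at least r+k−n and at most k ones, and let a₀ be the total number of ones of A. If (r+s−n)k ≤ a₀ and a₀ ≤ rs − (n−k)(r+s−n), then there exists an (n−r)×s (0,1)-matrix B such that in the n×s matrix obtained by placing B below A, every column contains exactly k ones and every row contains at least s+k−n and at most k ones. -/

import Mathlib

private lemma aux_sum_Ico_card (g : ℕ → ℕ) (hg0 : g 0 = 0) (hmono : ∀ t, g t ≤ g (t+1))
    (P : ℕ → Prop) [DecidablePred P] (N : ℕ) :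
    ∑ t ∈ Finset.range N, ((Finset.Ico (g t) (g (t+1))).filter P).card
      = ((Finset.range (g N)).filter P).card := by
  induction N with
  | zero => simp [hg0]
  | succ N ih =>
    rw [Finset.sum_range_succ, ih, Finset.range_eq_Ico, Finset.range_eq_Ico,
      ← Finset.Ico_union_Ico_eq_Ico (hg0 ▸ Nat.zero_le (g N) : 0 ≤ g N) (hmono N),
      Finset.filter_union,
      Finset.card_union_of_disjoint
        ((Finset.Ico_disjoint_Ico_consecutive 0 (g N) (g (N+1))).mono
          (Finset.filter_subset _ _) (Finset.filter_subset _ _)),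
      ← Finset.range_eq_Ico]

private lemma aux_mod_inj (m a dj : ℕ) (hd : dj ≤ m) :
    ∀ x ∈ Finset.Ico a (a + dj), ∀ y ∈ Finset.Ico a (a + dj), x % m = y % m → x = y := by
  intro x hx y hy hxy
  simp only [Finset.mem_Ico] at hx hy
  rcases le_total x y with h | h
  · have hdvd : m ∣ y - x := (Nat.modEq_iff_dvd' h).mp hxy
    have := Nat.eq_zero_of_dvd_of_lt hdvd (by omega)
    omega
  · have hdvd : m ∣ x - y := (Nat.modEq_iff_dvd' h).mp hxy.symm
    have := Nat.eq_zero_of_dvd_of_lt hdvd (by omega)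
    omega



/-- Theorem 1.6: Let n, r, s, k be positive integers with r, s, k ≤ n and
r + s ≥ n.  Let A be an r×s (0,1)-matrix in which every row contains at least s+k−n and
at most k ones and every column contains at least r+k−n and at most k ones, with a₀ ones
in total.  If (r+s−n)k ≤ a₀ ≤ rs − (n−k)(r+s−n), then there is an (n−r)×s (0,1)-matrix
B such that, stacking B below A, every column of the resulting n×s matrix contains
exactly k ones and every row contains at least s+k−n and at most k ones. -/
theorem theorem_one_six
    (n r s k : ℕ) (hr0 : 0 < r) (hs0 : 0 < s) (hk0 : 0 < k) (hn0 : 0 < n)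
    (hr : r ≤ n) (hs : s ≤ n) (hk : k ≤ n) (hrs : n ≤ r + s)
    (A : Fin r → Fin s → Bool)
    (hrow : ∀ i : Fin r,
      (s : ℤ) + (k : ℤ) - (n : ℤ) ≤
        ((Finset.univ.filter (fun j : Fin s => A i j = true)).card : ℤ) ∧
      (Finset.univ.filter (fun j : Fin s => A i j = true)).card ≤ k)
    (hcol : ∀ j : Fin s,
      (r : ℤ) + (k : ℤ) - (n : ℤ) ≤
        ((Finset.univ.filter (fun i : Fin r => A i j = true)).card : ℤ) ∧
      (Finset.univ.filter (fun i : Fin r => A i j = true)).card ≤ k)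
    (hlow : ((r : ℤ) + (s : ℤ) - (n : ℤ)) * (k : ℤ) ≤
      ((Finset.univ.filter (fun q : Fin r × Fin s => A q.1 q.2 = true)).card : ℤ))
    (hhigh : ((Finset.univ.filter (fun q : Fin r × Fin s => A q.1 q.2 = true)).card : ℤ) ≤
      (r : ℤ) * (s : ℤ) - ((n : ℤ) - (k : ℤ)) * ((r : ℤ) + (s : ℤ) - (n : ℤ))) :
    ∃ B : Fin (n - r) → Fin s → Bool,
      (∀ j : Fin s,
        (Finset.univ.filter (fun i : Fin r => A i j = true)).card +
          (Finset.univ.filter (fun i : Fin (n - r) => B i j = true)).card = k) ∧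
      (∀ i : Fin (n - r),
        (s : ℤ) + (k : ℤ) - (n : ℤ) ≤
          ((Finset.univ.filter (fun j : Fin s => B i j = true)).card : ℤ) ∧
        (Finset.univ.filter (fun j : Fin s => B i j = true)).card ≤ k) := by
  classical
  set m := n - r with hm
  set c : Fin s → ℕ := fun j => (Finset.univ.filter (fun i : Fin r => A i j = true)).card with hc
  set d : Fin s → ℕ := fun j => k - c j with hd
  have hcle : ∀ j, c j ≤ k := fun j => (hcol j).2
  have hcd : ∀ j, c j + d j = k := by
    intro j
    have h1 := hcle j
    have e2 : d j = k - c j := rfl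
    omega
  have hdm : ∀ j, d j ≤ m := by
    intro j
    have h1 := (hcol j).1
    have e1 : (c j : ℤ) = ((Finset.univ.filter (fun i : Fin r => A i j = true)).card : ℤ) := rfl
    have e2 : d j = k - c j := rfl
    omega
  set D : ℕ → ℕ := fun t => if h : t < s then d ⟨t, h⟩ else 0 with hD
  set g : ℕ → ℕ := fun j => ∑ t ∈ Finset.range j, D t with hg
  have hgsucc : ∀ t, g (t+1) = g t + D t := by
    intro t; simp only [hg, Finset.sum_range_succ]
  have hgmono : ∀ t, g t ≤ g (t+1) := fun t => by rw [hgsucc]; omega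
  set T := g s with hT
  set B : Fin m → Fin s → Bool := fun i j =>
    decide (∃ t ∈ Finset.Ico (g j.val) (g (j.val + 1)), t % m = i.val) with hB
  have hglen : ∀ j : Fin s, g (j.val + 1) = g j.val + d j := by
    intro j; rw [hgsucc]; simp only [hD, dif_pos j.isLt]
  -- column counts of B
  have hcolB : ∀ j : Fin s, (Finset.univ.filter (fun i : Fin m => B i j = true)).card = d j := by
    intro j
    rcases Nat.eq_zero_or_pos m with h0 | hm0
    · have hd0 : d j = 0 := by have := hdm j; omega
      have hle := Finset.card_filter_le (Finset.univ : Finset (Fin m)) (fun i => B i j = true)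
      simp only [Finset.card_univ, Fintype.card_fin, h0] at hle
      omega
    · have himage : (Finset.univ.filter (fun i : Fin m => B i j = true)) =
          (Finset.Ico (g j.val) (g (j.val + 1))).image
            (fun t => (⟨t % m, Nat.mod_lt t hm0⟩ : Fin m)) := by
        ext i
        simp only [Finset.mem_filter, Finset.mem_univ, true_and, hB, decide_eq_true_eq,
          Finset.mem_image]
        constructor
        · rintro ⟨t, ht, hti⟩
          exact ⟨t, ht, Fin.ext hti⟩
        · rintro ⟨t, ht, rfl⟩
          exact ⟨t, ht, rfl⟩
      rw [himage, Finset.card_image_of_injOn, Nat.card_Ico, hglen j]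
      · omega
      · intro x hx y hy hxy
        have hxy' : x % m = y % m := by
          have := congrArg Fin.val hxy
          simpa using this
        simp only [Finset.mem_coe] at hx hy
        rw [hglen j] at hx hy
        exact aux_mod_inj m (g j.val) (d j) (hdm j) x hx y hy hxy'
  -- total count identity
  have ha : (Finset.univ.filter (fun q : Fin r × Fin s => A q.1 q.2 = true)).card
      = ∑ j : Fin s, c j := by
    rw [Finset.card_filter, Fintype.sum_prod_type, Finset.sum_comm]
    refine Finset.sum_congr rfl fun j _ => ?_
    rw [show c j = (Finset.univ.filter (fun i : Fin r => A i j = true)).card from rfl,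
      Finset.card_filter]
  have hTsum : (∑ j : Fin s, c j) + T = s * k := by
    have h1 : T = ∑ j : Fin s, d j := by
      rw [hT, show g s = ∑ t ∈ Finset.range s, D t from rfl,
        ← Fin.sum_univ_eq_sum_range D s]
      refine Finset.sum_congr rfl fun j _ => ?_
      simp only [hD, dif_pos j.isLt]
    rw [h1, ← Finset.sum_add_distrib]
    calc ∑ j : Fin s, (c j + d j) = ∑ j : Fin s, k := Finset.sum_congr rfl fun j _ => hcd j
    _ = s * k := by simp [Finset.sum_const, mul_comm]
  rw [ha] at hlow hhigh
  have hTZ : ((∑ j : Fin s, c j : ℕ) : ℤ) + (T : ℤ) = (s : ℤ) * k := by exact_mod_cast hTsum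
  have hmZ : (m : ℤ) = (n : ℤ) - r := by omega
  have hTk : T ≤ m * k := by
    have hid : ((n:ℤ)-r)*k = (s:ℤ)*k - ((r:ℤ)+s-n)*k := by ring
    have h2 : (T : ℤ) ≤ (m : ℤ) * k := by rw [hmZ]; linarith
    exact_mod_cast h2
  set L : ℕ := k + s - n with hL
  have hTL : L * m ≤ T := by
    rcases le_or_gt n (k + s) with hks | hks
    · have hLZ : (L : ℤ) = (k : ℤ) + s - n := by omega
      have hid : ((k:ℤ)+s-n) * ((n:ℤ)-r) =
          (s:ℤ)*k - ((r:ℤ)*s - ((n:ℤ)-k)*((r:ℤ)+s-n)) := by ring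
      have h2 : (L : ℤ) * m ≤ (T : ℤ) := by rw [hLZ, hmZ]; linarith
      exact_mod_cast h2
    · have hL0 : L = 0 := by omega
      simp [hL0]
  -- row counts of B
  have hrowB : ∀ i : Fin m, (Finset.univ.filter (fun j : Fin s => B i j = true)).card
      = ((Finset.range T).filter (fun t => t % m = i.val)).card := by
    intro i
    rw [Finset.card_filter]
    have step1 : ∀ j : Fin s, (if B i j = true then 1 else 0) =
        ((Finset.Ico (g j.val) (g (j.val + 1))).filter (fun t => t % m = i.val)).card := by
      intro j
      by_cases hb : B i j = true
      · rw [if_pos hb]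
        have hex : ∃ t ∈ Finset.Ico (g j.val) (g (j.val + 1)), t % m = i.val := by
          simpa only [hB, decide_eq_true_eq] using hb
        obtain ⟨t, ht, hti⟩ := hex
        have hne : ((Finset.Ico (g j.val) (g (j.val+1))).filter
            (fun t => t % m = i.val)).Nonempty := ⟨t, Finset.mem_filter.mpr ⟨ht, hti⟩⟩
        have hle : ((Finset.Ico (g j.val) (g (j.val+1))).filter
            (fun t => t % m = i.val)).card ≤ 1 := by
          rw [Finset.card_le_one]
          intro x hx y hy
          simp only [Finset.mem_filter] at hx hy
          rw [hglen j] at hx hy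
          exact aux_mod_inj m (g j.val) (d j) (hdm j) x hx.1 y hy.1 (hx.2.trans hy.2.symm)
        have hpos := Finset.card_pos.mpr hne
        omega
      · rw [if_neg hb]
        symm
        rw [Finset.card_eq_zero, Finset.filter_eq_empty_iff]
        intro t ht hti
        exact hb (by simp only [hB, decide_eq_true_eq]; exact ⟨t, ht, hti⟩)
    rw [Finset.sum_congr rfl (fun j _ => step1 j)]
    rw [Fin.sum_univ_eq_sum_range
      (fun t => ((Finset.Ico (g t) (g (t+1))).filter (fun x => x % m = i.val)).card) s]
    exact aux_sum_Ico_card g (by simp [hg]) hgmono _ s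
  -- finish
  refine ⟨B, fun j => ?_, fun i => ?_⟩
  · rw [hcolB j]
    exact hcd j
  · have hm0 : 0 < m := i.pos
    rw [hrowB i]
    have hup : ((Finset.range T).filter (fun t => t % m = i.val)).card ≤ k := by
      have h := Finset.card_le_card_of_injOn (f := fun t => t / m)
        (s := (Finset.range T).filter (fun t => t % m = i.val)) (t := Finset.range k)
        ?_ ?_
      · simpa using h
      · intro t ht
        simp only [Finset.mem_coe, Finset.mem_filter, Finset.mem_range] at ht ⊢
        rw [Nat.div_lt_iff_lt_mul hm0, Nat.mul_comm]
        omega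
      · intro x hx y hy hxy
        simp only [Finset.mem_coe, Finset.mem_filter, Finset.mem_range] at hx hy
        have hxy' : x / m = y / m := hxy
        have ex := Nat.div_add_mod x m
        have ey := Nat.div_add_mod y m
        calc x = m * (x / m) + x % m := ex.symm
        _ = m * (y / m) + y % m := by rw [hxy', hx.2, hy.2]
        _ = y := ey
    have hlo : T / m ≤ ((Finset.range T).filter (fun t => t % m = i.val)).card := by
      have h := Finset.card_le_card_of_injOn (f := fun q => q * m + i.val)
        (s := Finset.range (T / m)) (t := (Finset.range T).filter (fun t => t % m = i.val))
        ?_ ?_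
      · simpa using h
      · intro q hq
        simp only [Finset.mem_coe, Finset.mem_range] at hq
        have h1 : (q+1) * m ≤ T := (Nat.le_div_iff_mul_le hm0).mp (by omega)
        have h2 : q * m + i.val < T := by
          have hid : (q+1)*m = q*m + m := by ring
          have him := i.isLt
          linarith
        show q * m + i.val ∈ _
        refine Finset.mem_filter.mpr ⟨Finset.mem_range.mpr h2, ?_⟩
        show (q * m + i.val) % m = i.val
        rw [Nat.mul_comm, Nat.mul_add_mod, Nat.mod_eq_of_lt i.isLt]
      · intro x _ y _ hxy
        have hxy' : x * m + i.val = y * m + i.val := hxy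
        exact Nat.eq_of_mul_eq_mul_right hm0 (Nat.add_right_cancel hxy')
    have hLlo : L ≤ T / m := (Nat.le_div_iff_mul_le hm0).mpr hTL
    have hfin : L ≤ ((Finset.range T).filter (fun t => t % m = i.val)).card :=
      le_trans hLlo hlo
    constructor
    · omega
    · exact hup
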